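/- (Stationary points are exactly the fixed points of the majorization update.) Let X be an n×p real matrix with η₂²(X) > 0 and d_ij(X) > 0 for every pair i < j with w_ij > 0. Then the Fréchet derivative of σ₂ at X is zero if and only if ((1 − σ₂(X))·V + σ₂(X)·M(X))·X = B(X)·X. -/

import Mathlib

open scoped BigOperators
open Matrix

/-- Euclidean distance between rows `i` and `j` of an `n × p` matrix. -/
noncomputable def rowDist {n p : ℕ} (X : Matrix (Fin n) (Fin p) ℝ) (i j : Fin n) : ℝ :=
  Real.sqrt (∑ k : Fin p, (X i k - X j k) ^ 2)

/-- The matrix `A_ij = (e_i - e_j)(e_i - e_j)ᵀ`. -/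
noncomputable def Amat {n : ℕ} (i j : Fin n) : Matrix (Fin n) (Fin n) ℝ :=
  Matrix.vecMulVec (Pi.single i 1 - Pi.single j 1) (Pi.single i 1 - Pi.single j 1)

/-- The matrix `V = Σ_{i<j} w_ij A_ij`. -/
noncomputable def Vmat {n : ℕ} (w : Fin n → Fin n → ℝ) : Matrix (Fin n) (Fin n) ℝ :=
  ∑ i : Fin n, ∑ j : Fin n, if i < j then w i j • Amat i j else 0

/-- Mean distance `d̄(X) = Σ_{i<j} w_ij d_ij(X)`. -/
noncomputable def dbarM {n p : ℕ} (w : Fin n → Fin n → ℝ)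
    (X : Matrix (Fin n) (Fin p) ℝ) : ℝ :=
  ∑ i : Fin n, ∑ j : Fin n, if i < j then w i j * rowDist X i j else 0

/-- The matrix `M(X) = d̄(X) · Σ_{i<j, d_ij(X)>0} (w_ij/d_ij(X)) A_ij`. -/
noncomputable def Mmat {n p : ℕ} (w : Fin n → Fin n → ℝ)
    (X : Matrix (Fin n) (Fin p) ℝ) : Matrix (Fin n) (Fin n) ℝ :=
  dbarM w X •
    ∑ i : Fin n, ∑ j : Fin n,
      if i < j ∧ 0 < rowDist X i j then (w i j / rowDist X i j) • Amat i j else 0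

/-- The matrix `B(X) = Σ_{i<j, d_ij(X)>0} w_ij (δ_ij/d_ij(X)) A_ij`. -/
noncomputable def Bmat {n p : ℕ} (w δ : Fin n → Fin n → ℝ)
    (X : Matrix (Fin n) (Fin p) ℝ) : Matrix (Fin n) (Fin n) ℝ :=
  ∑ i : Fin n, ∑ j : Fin n,
    if i < j ∧ 0 < rowDist X i j then (w i j * (δ i j / rowDist X i j)) • Amat i j else 0

/-- Raw stress as a function of the configuration matrix. -/
noncomputable def sigmaRM {n p : ℕ} (w δ : Fin n → Fin n → ℝ)
    (X : Matrix (Fin n) (Fin p) ℝ) : ℝ :=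
  ∑ i : Fin n, ∑ j : Fin n, if i < j then w i j * (δ i j - rowDist X i j) ^ 2 else 0

/-- The variance of the distances `η₂²(X)`. -/
noncomputable def eta2sqM {n p : ℕ} (w : Fin n → Fin n → ℝ)
    (X : Matrix (Fin n) (Fin p) ℝ) : ℝ :=
  ∑ i : Fin n, ∑ j : Fin n,
    if i < j then w i j * (rowDist X i j - dbarM w X) ^ 2 else 0

/-- Kruskal's stress formula two as a function of the configuration matrix. -/
noncomputable def sigma2M {n p : ℕ} (w δ : Fin n → Fin n → ℝ)
    (X : Matrix (Fin n) (Fin p) ℝ) : ℝ :=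
  sigmaRM w δ X / eta2sqM w X

attribute [local instance] Matrix.frobeniusNormedAddCommGroup Matrix.frobeniusNormedSpace

section Helpers
variable {n p : ℕ}

/-- The linear functional `H ↦ ∑ r k, G r k * H r k` (Frobenius pairing with `G`). -/
noncomputable def Fdot (G : Matrix (Fin n) (Fin p) ℝ) :
    Matrix (Fin n) (Fin p) ℝ →L[ℝ] ℝ :=
  LinearMap.toContinuousLinearMap
    { toFun := fun H => ∑ r : Fin n, ∑ k : Fin p, G r k * H r k
      map_add' := fun H1 H2 => by
        simp [Matrix.add_apply, mul_add, Finset.sum_add_distrib]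
      map_smul' := fun c H => by
        simp [Matrix.smul_apply, Finset.mul_sum, mul_left_comm] }

lemma Fdot_apply (G H : Matrix (Fin n) (Fin p) ℝ) :
    Fdot G H = ∑ r : Fin n, ∑ k : Fin p, G r k * H r k := rfl

lemma Fdot_add (G1 G2 : Matrix (Fin n) (Fin p) ℝ) : Fdot (G1 + G2) = Fdot G1 + Fdot G2 := by
  ext H
  simp [Fdot_apply, Matrix.add_apply, add_mul, Finset.sum_add_distrib]

lemma Fdot_smul (c : ℝ) (G : Matrix (Fin n) (Fin p) ℝ) : Fdot (c • G) = c • Fdot G := by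
  ext H
  simp [Fdot_apply, Matrix.smul_apply, Finset.mul_sum, mul_assoc]

lemma Fdot_zero : Fdot (0 : Matrix (Fin n) (Fin p) ℝ) = 0 := by
  ext H; simp [Fdot_apply]

lemma Fdot_sub (G1 G2 : Matrix (Fin n) (Fin p) ℝ) : Fdot (G1 - G2) = Fdot G1 - Fdot G2 := by
  ext H
  simp [Fdot_apply, Matrix.sub_apply, sub_mul, Finset.sum_sub_distrib]

lemma Fdot_sum {ι : Type*} (s : Finset ι) (G : ι → Matrix (Fin n) (Fin p) ℝ) :
    Fdot (∑ i ∈ s, G i) = ∑ i ∈ s, Fdot (G i) := by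
  classical
  induction s using Finset.induction_on with
  | empty => simp [Fdot_zero]
  | insert _ _ h ih => simp [Finset.sum_insert h, Fdot_add, ih]

lemma Fdot_stdBasis (G : Matrix (Fin n) (Fin p) ℝ) (r : Fin n) (k : Fin p) :
    Fdot G (Matrix.single r k 1) = G r k := by
  simp [Fdot_apply, Matrix.single, Matrix.of_apply, mul_ite, mul_one, mul_zero]
  rw [Finset.sum_eq_single r]
  · rw [Finset.sum_eq_single k] <;> simp +contextual [eq_comm]
  · intro b _ hb; apply Finset.sum_eq_zero; simp +contextual [eq_comm, hb, Ne.symm hb]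
  · simp

lemma Fdot_eq_zero_iff (G : Matrix (Fin n) (Fin p) ℝ) : Fdot G = 0 ↔ G = 0 := by
  constructor
  · intro h
    ext r k
    have := congrArg (fun L : Matrix (Fin n) (Fin p) ℝ →L[ℝ] ℝ =>
      L (Matrix.single r k 1)) h
    simpa [Fdot_stdBasis] using this
  · rintro rfl; exact Fdot_zero

section Helpers2
variable {n p : ℕ}

lemma Amat_mul_apply (i j : Fin n) (X : Matrix (Fin n) (Fin p) ℝ) (r : Fin n) (k : Fin p) :
    (Amat i j * X) r k
      = ((Pi.single i 1 - Pi.single j 1 : Fin n → ℝ) r) * (X i k - X j k) := by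
  simp [Amat, Matrix.mul_apply, Matrix.vecMulVec_apply, Pi.sub_apply, mul_assoc,
    sub_mul, Pi.single_apply, ite_mul, one_mul, zero_mul, Finset.sum_sub_distrib,
    mul_sub]

lemma sum_single_mul (i : Fin n) (v : Fin n → ℝ) :
    ∑ r : Fin n, (Pi.single i 1 : Fin n → ℝ) r * v r = v i := by
  simp [Pi.single_apply, ite_mul]

lemma Fdot_Amat_mul (i j : Fin n) (X H : Matrix (Fin n) (Fin p) ℝ) :
    Fdot (Amat i j * X) H = ∑ k : Fin p, (X i k - X j k) * (H i k - H j k) := by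
  rw [Fdot_apply, Finset.sum_comm]
  refine Finset.sum_congr rfl fun k _ => ?_
  have h : ∀ r : Fin n, (Amat i j * X) r k * H r k
      = (X i k - X j k) * ((Pi.single i 1 : Fin n → ℝ) r * H r k
          - (Pi.single j 1 : Fin n → ℝ) r * H r k) := by
    intro r; rw [Amat_mul_apply]; simp [Pi.sub_apply]; ring
  rw [Finset.sum_congr rfl fun r _ => h r, ← Finset.mul_sum,
    Finset.sum_sub_distrib, sum_single_mul, sum_single_mul]

lemma Fdot_std_apply (i : Fin n) (k : Fin p) (H : Matrix (Fin n) (Fin p) ℝ) :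
    Fdot (Matrix.single i k (1:ℝ)) H = H i k := by
  rw [Fdot_apply, Finset.sum_eq_single i]
  · rw [Finset.sum_eq_single k] <;>
      simp +contextual [Matrix.single, eq_comm, Ne.symm]
  · intro b _ hb; apply Finset.sum_eq_zero
    simp +contextual [Matrix.single, eq_comm, hb, Ne.symm hb]
  · simp

lemma hasFDerivAt_entrySub (i j : Fin n) (k : Fin p) (X : Matrix (Fin n) (Fin p) ℝ) :
    HasFDerivAt (fun Y : Matrix (Fin n) (Fin p) ℝ => Y i k - Y j k)
      (Fdot (Matrix.single i k 1 - Matrix.single j k 1)) X := by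
  have h : (fun Y : Matrix (Fin n) (Fin p) ℝ => Y i k - Y j k)
      = fun Y => Fdot (Matrix.single i k (1:ℝ) - Matrix.single j k 1) Y := by
    funext Y
    rw [Fdot_sub, ContinuousLinearMap.sub_apply, Fdot_std_apply, Fdot_std_apply]
  rw [h]
  exact (Fdot _).hasFDerivAt

lemma hasFDerivAt_q (i j : Fin n) (X : Matrix (Fin n) (Fin p) ℝ) :
    HasFDerivAt (fun Y : Matrix (Fin n) (Fin p) ℝ => ∑ k : Fin p, (Y i k - Y j k) ^ 2)
      (Fdot ((2:ℝ) • (Amat i j * X))) X := by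
  have hterm : ∀ k : Fin p,
      HasFDerivAt (fun Y : Matrix (Fin n) (Fin p) ℝ => (Y i k - Y j k) ^ 2)
        ((2 * (X i k - X j k)) •
          Fdot (Matrix.single i k 1 - Matrix.single j k 1)) X := by
    intro k
    have h : HasFDerivAt (fun Y : Matrix (Fin n) (Fin p) ℝ => (Y i k - Y j k) * (Y i k - Y j k))
        ((X i k - X j k) • Fdot (Matrix.single i k 1 - Matrix.single j k 1)
          + (X i k - X j k) • Fdot (Matrix.single i k 1 - Matrix.single j k 1)) X :=
      (hasFDerivAt_entrySub i j k X).mul (hasFDerivAt_entrySub i j k X)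
    have hfun : (fun Y : Matrix (Fin n) (Fin p) ℝ => (Y i k - Y j k) ^ 2)
        = fun Y => (Y i k - Y j k) * (Y i k - Y j k) := by funext Y; ring
    rw [hfun]
    convert h using 1
    rw [← add_smul]
    congr 1
    ring
  have h : HasFDerivAt (fun Y : Matrix (Fin n) (Fin p) ℝ => ∑ k : Fin p, (Y i k - Y j k) ^ 2)
      (∑ k : Fin p, (2 * (X i k - X j k)) • Fdot (Matrix.single i k 1 - Matrix.single j k 1)) X :=
    HasFDerivAt.fun_sum (u := (Finset.univ : Finset (Fin p))) (fun k _ => hterm k)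
  convert h using 1
  ext H
  rw [Fdot_smul, ContinuousLinearMap.smul_apply, Fdot_Amat_mul,
    ContinuousLinearMap.sum_apply, Finset.smul_sum]
  refine Finset.sum_congr rfl fun k _ => ?_
  rw [ContinuousLinearMap.smul_apply, Fdot_sub, ContinuousLinearMap.sub_apply,
    Fdot_std_apply, Fdot_std_apply]
  simp only [smul_eq_mul]
  ring

lemma rowDist_pos_q_ne {X : Matrix (Fin n) (Fin p) ℝ} {i j : Fin n}
    (h : 0 < rowDist X i j) : (∑ k : Fin p, (X i k - X j k) ^ 2) ≠ 0 := by
  intro h0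
  rw [rowDist, h0, Real.sqrt_zero] at h
  exact lt_irrefl 0 h

lemma hasFDerivAt_rowDist {X : Matrix (Fin n) (Fin p) ℝ} {i j : Fin n}
    (h : 0 < rowDist X i j) :
    HasFDerivAt (fun Y => rowDist Y i j)
      (Fdot ((rowDist X i j)⁻¹ • (Amat i j * X))) X := by
  have hq := rowDist_pos_q_ne h
  have hd : HasFDerivAt
      (fun Y : Matrix (Fin n) (Fin p) ℝ => Real.sqrt (∑ k : Fin p, (Y i k - Y j k) ^ 2))
      ((1 / (2 * Real.sqrt (∑ k : Fin p, (X i k - X j k) ^ 2))) • Fdot ((2:ℝ) • (Amat i j * X))) X :=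
    (hasFDerivAt_q i j X).sqrt hq
  have heq : (fun Y => rowDist Y i j)
      = fun Y => Real.sqrt (∑ k : Fin p, (Y i k - Y j k) ^ 2) := rfl
  rw [heq]
  convert hd using 1
  rw [Fdot_smul, Fdot_smul, smul_smul]
  congr 1
  rw [rowDist]
  field_simp

end Helpers2

section Helpers3
variable {n p : ℕ}

/-- Gradient matrix of raw stress. -/
noncomputable def GRmat (w δ : Fin n → Fin n → ℝ) (X : Matrix (Fin n) (Fin p) ℝ) :
    Matrix (Fin n) (Fin p) ℝ :=
  ∑ i : Fin n, ∑ j : Fin n,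
    if i < j then (w i j * (2 * (rowDist X i j - δ i j) / rowDist X i j)) • (Amat i j * X)
    else 0

/-- Gradient matrix of the mean distance. -/
noncomputable def NXmat (w : Fin n → Fin n → ℝ) (X : Matrix (Fin n) (Fin p) ℝ) :
    Matrix (Fin n) (Fin p) ℝ :=
  ∑ i : Fin n, ∑ j : Fin n,
    if i < j ∧ 0 < rowDist X i j then (w i j / rowDist X i j) • (Amat i j * X) else 0

/-- Gradient matrix of `η₂²`. -/
noncomputable def GEmat (w : Fin n → Fin n → ℝ) (X : Matrix (Fin n) (Fin p) ℝ) :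
    Matrix (Fin n) (Fin p) ℝ :=
  ∑ i : Fin n, ∑ j : Fin n,
    if i < j then
      (2 * w i j * (rowDist X i j - dbarM w X) / rowDist X i j) • (Amat i j * X)
        - (2 * w i j * (rowDist X i j - dbarM w X)) • NXmat w X
    else 0

variable {w δ : Fin n → Fin n → ℝ} {X : Matrix (Fin n) (Fin p) ℝ}

lemma hasFDerivAt_sigmaRM
    (hw : ∀ i j : Fin n, i < j → 0 ≤ w i j)
    (hd : ∀ i j : Fin n, i < j → 0 < w i j → 0 < rowDist X i j) :
    HasFDerivAt (sigmaRM w δ) (Fdot (GRmat w δ X)) X := by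
  have hfun : sigmaRM w δ = fun Y : Matrix (Fin n) (Fin p) ℝ =>
      ∑ i : Fin n, ∑ j : Fin n,
        if i < j then w i j * (δ i j - rowDist Y i j) ^ 2 else 0 := rfl
  rw [hfun, GRmat, Fdot_sum]
  refine HasFDerivAt.fun_sum fun i _ => ?_
  rw [Fdot_sum]
  refine HasFDerivAt.fun_sum fun j _ => ?_
  by_cases hij : i < j
  · rcases (hw i j hij).eq_or_lt with hw0 | hwpos
    · have hfn : (fun Y : Matrix (Fin n) (Fin p) ℝ =>
          if i < j then w i j * (δ i j - rowDist Y i j) ^ 2 else 0) = fun _ => (0:ℝ) := by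
        funext Y; simp [hij, ← hw0]
      have hD : Fdot (if i < j then
            (w i j * (2 * (rowDist X i j - δ i j) / rowDist X i j)) • (Amat i j * X)
          else 0) = 0 := by
        simp [hij, ← hw0, Fdot_zero]
      rw [hfn, hD]
      exact hasFDerivAt_const 0 X
    · have hdpos := hd i j hij hwpos
      have hdne : rowDist X i j ≠ 0 := ne_of_gt hdpos
      have hdist : HasFDerivAt (fun Y => rowDist Y i j)
          ((rowDist X i j)⁻¹ • Fdot (Amat i j * X)) X := by
        have h := hasFDerivAt_rowDist hdpos
        rwa [Fdot_smul] at h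
      have hsub : HasFDerivAt (fun Y => δ i j - rowDist Y i j)
          (-((rowDist X i j)⁻¹ • Fdot (Amat i j * X))) X := by
        have h0 : HasFDerivAt (fun Y : Matrix (Fin n) (Fin p) ℝ => δ i j - rowDist Y i j)
            ((0 : Matrix (Fin n) (Fin p) ℝ →L[ℝ] ℝ) - (rowDist X i j)⁻¹ • Fdot (Amat i j * X)) X :=
          (hasFDerivAt_const (δ i j) X).sub hdist
        simpa using h0
      have h2 := hsub.mul hsub
      have hmul : HasFDerivAt (fun Y : Matrix (Fin n) (Fin p) ℝ =>
          w i j * ((δ i j - rowDist Y i j) * (δ i j - rowDist Y i j)))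
          (w i j • ((δ i j - rowDist X i j) • -((rowDist X i j)⁻¹ • Fdot (Amat i j * X))
            + (δ i j - rowDist X i j) • -((rowDist X i j)⁻¹ • Fdot (Amat i j * X)))) X :=
        h2.const_mul (w i j)
      have hfn : (fun Y : Matrix (Fin n) (Fin p) ℝ =>
          if i < j then w i j * (δ i j - rowDist Y i j) ^ 2 else 0)
          = fun Y => w i j * ((δ i j - rowDist Y i j) * (δ i j - rowDist Y i j)) := by
        funext Y; rw [if_pos hij]; ring
      rw [hfn, if_pos hij, Fdot_smul]
      refine hmul.congr_fderiv (Eq.symm ?_)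
      rw [div_eq_mul_inv]
      module
  · have hD : Fdot (if i < j then
        (w i j * (2 * (rowDist X i j - δ i j) / rowDist X i j)) • (Amat i j * X)
        else 0) = 0 := by simp [hij, Fdot_zero]
    have hfn : (fun Y : Matrix (Fin n) (Fin p) ℝ =>
        if i < j then w i j * (δ i j - rowDist Y i j) ^ 2 else 0) = fun _ => (0:ℝ) := by
      funext Y; simp [hij]
    rw [hfn, hD]
    exact hasFDerivAt_const 0 X

lemma hasFDerivAt_dbarM
    (hw : ∀ i j : Fin n, i < j → 0 ≤ w i j)
    (hd : ∀ i j : Fin n, i < j → 0 < w i j → 0 < rowDist X i j) :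
    HasFDerivAt (dbarM w) (Fdot (NXmat w X)) X := by
  have hfun : dbarM w = fun Y : Matrix (Fin n) (Fin p) ℝ =>
      ∑ i : Fin n, ∑ j : Fin n, if i < j then w i j * rowDist Y i j else 0 := rfl
  rw [hfun, NXmat, Fdot_sum]
  refine HasFDerivAt.fun_sum fun i _ => ?_
  rw [Fdot_sum]
  refine HasFDerivAt.fun_sum fun j _ => ?_
  by_cases hij : i < j
  · rcases (hw i j hij).eq_or_lt with hw0 | hwpos
    · have hfn : (fun Y : Matrix (Fin n) (Fin p) ℝ =>
          if i < j then w i j * rowDist Y i j else 0) = fun _ => (0:ℝ) := by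
        funext Y; simp [hij, ← hw0]
      have hD : Fdot (if i < j ∧ 0 < rowDist X i j then
            (w i j / rowDist X i j) • (Amat i j * X) else 0) = 0 := by
        rcases em (0 < rowDist X i j) with h | h <;>
          simp [hij, h, ← hw0, Fdot_zero]
      rw [hfn, hD]
      exact hasFDerivAt_const 0 X
    · have hdpos := hd i j hij hwpos
      have hdist : HasFDerivAt (fun Y => rowDist Y i j)
          ((rowDist X i j)⁻¹ • Fdot (Amat i j * X)) X := by
        have h := hasFDerivAt_rowDist hdpos
        rwa [Fdot_smul] at h
      have hmul : HasFDerivAt (fun Y : Matrix (Fin n) (Fin p) ℝ => w i j * rowDist Y i j)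
          (w i j • ((rowDist X i j)⁻¹ • Fdot (Amat i j * X))) X :=
        hdist.const_mul (w i j)
      have hfn : (fun Y : Matrix (Fin n) (Fin p) ℝ =>
          if i < j then w i j * rowDist Y i j else 0)
          = fun Y => w i j * rowDist Y i j := by
        funext Y; simp [hij]
      rw [hfn, if_pos ⟨hij, hdpos⟩, Fdot_smul]
      refine hmul.congr_fderiv (Eq.symm ?_)
      rw [div_eq_mul_inv]
      module
  · have hD : Fdot (if i < j ∧ 0 < rowDist X i j then
        (w i j / rowDist X i j) • (Amat i j * X) else 0) = 0 := by
      simp [hij, Fdot_zero]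
    have hfn : (fun Y : Matrix (Fin n) (Fin p) ℝ =>
        if i < j then w i j * rowDist Y i j else 0) = fun _ => (0:ℝ) := by
      funext Y; simp [hij]
    rw [hfn, hD]
    exact hasFDerivAt_const 0 X

lemma hasFDerivAt_eta2sqM
    (hw : ∀ i j : Fin n, i < j → 0 ≤ w i j)
    (hd : ∀ i j : Fin n, i < j → 0 < w i j → 0 < rowDist X i j) :
    HasFDerivAt (eta2sqM w) (Fdot (GEmat w X)) X := by
  have hdbar := hasFDerivAt_dbarM (w := w) (X := X) hw hd
  have hfun : eta2sqM w = fun Y : Matrix (Fin n) (Fin p) ℝ =>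
      ∑ i : Fin n, ∑ j : Fin n,
        if i < j then w i j * (rowDist Y i j - dbarM w Y) ^ 2 else 0 := rfl
  rw [hfun, GEmat, Fdot_sum]
  refine HasFDerivAt.fun_sum fun i _ => ?_
  rw [Fdot_sum]
  refine HasFDerivAt.fun_sum fun j _ => ?_
  by_cases hij : i < j
  · rcases (hw i j hij).eq_or_lt with hw0 | hwpos
    · have hfn : (fun Y : Matrix (Fin n) (Fin p) ℝ =>
          if i < j then w i j * (rowDist Y i j - dbarM w Y) ^ 2 else 0)
          = fun _ => (0:ℝ) := by
        funext Y; simp [hij, ← hw0]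
      have hD : Fdot (if i < j then
            (2 * w i j * (rowDist X i j - dbarM w X) / rowDist X i j) • (Amat i j * X)
              - (2 * w i j * (rowDist X i j - dbarM w X)) • NXmat w X
          else 0) = 0 := by
        simp [hij, ← hw0, Fdot_zero]
      rw [hfn, hD]
      exact hasFDerivAt_const 0 X
    · have hdpos := hd i j hij hwpos
      have hdne : rowDist X i j ≠ 0 := ne_of_gt hdpos
      have hdist : HasFDerivAt (fun Y => rowDist Y i j)
          ((rowDist X i j)⁻¹ • Fdot (Amat i j * X)) X := by
        have h := hasFDerivAt_rowDist hdpos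
        rwa [Fdot_smul] at h
      have hsub : HasFDerivAt (fun Y => rowDist Y i j - dbarM w Y)
          ((rowDist X i j)⁻¹ • Fdot (Amat i j * X) - Fdot (NXmat w X)) X :=
        hdist.sub hdbar
      have hsq : HasFDerivAt (fun Y => (rowDist Y i j - dbarM w Y) ^ 2)
          ((2 * (rowDist X i j - dbarM w X)) •
            ((rowDist X i j)⁻¹ • Fdot (Amat i j * X) - Fdot (NXmat w X))) X := by
        have h2 : HasFDerivAt (fun Y : Matrix (Fin n) (Fin p) ℝ =>
            (rowDist Y i j - dbarM w Y) * (rowDist Y i j - dbarM w Y))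
            ((rowDist X i j - dbarM w X) •
                ((rowDist X i j)⁻¹ • Fdot (Amat i j * X) - Fdot (NXmat w X))
              + (rowDist X i j - dbarM w X) •
                ((rowDist X i j)⁻¹ • Fdot (Amat i j * X) - Fdot (NXmat w X))) X :=
          hsub.mul hsub
        have hfun2 : (fun Y : Matrix (Fin n) (Fin p) ℝ =>
            (rowDist Y i j - dbarM w Y) ^ 2)
            = fun Y => (rowDist Y i j - dbarM w Y) * (rowDist Y i j - dbarM w Y) := by
          funext Y; ring
        rw [hfun2]
        convert h2 using 1
        rw [← add_smul]
        congr 1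
        ring
      have hmul : HasFDerivAt (fun Y : Matrix (Fin n) (Fin p) ℝ =>
          w i j * (rowDist Y i j - dbarM w Y) ^ 2)
          (w i j • ((2 * (rowDist X i j - dbarM w X)) •
            ((rowDist X i j)⁻¹ • Fdot (Amat i j * X) - Fdot (NXmat w X)))) X :=
        hsq.const_mul (w i j)
      have hfn : (fun Y : Matrix (Fin n) (Fin p) ℝ =>
          if i < j then w i j * (rowDist Y i j - dbarM w Y) ^ 2 else 0)
          = fun Y => w i j * (rowDist Y i j - dbarM w Y) ^ 2 := by
        funext Y; simp [hij]
      rw [hfn, if_pos hij, Fdot_sub, Fdot_smul, Fdot_smul]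
      refine hmul.congr_fderiv (Eq.symm ?_)
      rw [div_eq_mul_inv]
      module
  · have hD : Fdot (if i < j then
        (2 * w i j * (rowDist X i j - dbarM w X) / rowDist X i j) • (Amat i j * X)
          - (2 * w i j * (rowDist X i j - dbarM w X)) • NXmat w X
        else 0) = 0 := by simp [hij, Fdot_zero]
    have hfn : (fun Y : Matrix (Fin n) (Fin p) ℝ =>
        if i < j then w i j * (rowDist Y i j - dbarM w Y) ^ 2 else 0) = fun _ => (0:ℝ) := by
      funext Y; simp [hij]
    rw [hfn, hD]
    exact hasFDerivAt_const 0 X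

end Helpers3

section Helpers4
variable {n p : ℕ}

lemma smul_double_sum (c : ℝ) (f : Fin n → Fin n → Matrix (Fin n) (Fin p) ℝ) :
    c • (∑ i : Fin n, ∑ j : Fin n, f i j) = ∑ i : Fin n, ∑ j : Fin n, c • f i j := by
  rw [Finset.smul_sum]
  exact Finset.sum_congr rfl fun i _ => Finset.smul_sum

lemma add_double_sum (f g : Fin n → Fin n → Matrix (Fin n) (Fin p) ℝ) :
    (∑ i : Fin n, ∑ j : Fin n, f i j) + (∑ i : Fin n, ∑ j : Fin n, g i j)
      = ∑ i : Fin n, ∑ j : Fin n, (f i j + g i j) := by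
  rw [← Finset.sum_add_distrib]
  exact Finset.sum_congr rfl fun i _ => Finset.sum_add_distrib.symm

lemma sub_double_sum (f g : Fin n → Fin n → Matrix (Fin n) (Fin p) ℝ) :
    (∑ i : Fin n, ∑ j : Fin n, f i j) - (∑ i : Fin n, ∑ j : Fin n, g i j)
      = ∑ i : Fin n, ∑ j : Fin n, (f i j - g i j) := by
  rw [← Finset.sum_sub_distrib]
  exact Finset.sum_congr rfl fun i _ => (Finset.sum_sub_distrib _ _).symm

variable {w δ : Fin n → Fin n → ℝ} {X : Matrix (Fin n) (Fin p) ℝ}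

lemma GEmat_eq
    (hw1 : (∑ i : Fin n, ∑ j : Fin n, if i < j then w i j else 0) = 1) :
    GEmat w X = ∑ i : Fin n, ∑ j : Fin n,
      if i < j then
        (2 * w i j * (rowDist X i j - dbarM w X) / rowDist X i j) • (Amat i j * X)
      else 0 := by
  have hsplit : ∀ i j : Fin n,
      (if i < j then
        (2 * w i j * (rowDist X i j - dbarM w X) / rowDist X i j) • (Amat i j * X)
          - (2 * w i j * (rowDist X i j - dbarM w X)) • NXmat w X
      else 0)
      = (if i < j then
          (2 * w i j * (rowDist X i j - dbarM w X) / rowDist X i j) • (Amat i j * X)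
        else 0)
        - (if i < j then (2 * w i j * (rowDist X i j - dbarM w X)) else 0) • NXmat w X := by
    intro i j
    split
    · rfl
    · simp
  have hcoef : (∑ i : Fin n, ∑ j : Fin n,
      if i < j then (2 * w i j * (rowDist X i j - dbarM w X)) else 0) = 0 := by
    have hterm : ∀ i j : Fin n,
        (if i < j then (2 * w i j * (rowDist X i j - dbarM w X)) else 0)
          = 2 * (if i < j then w i j * rowDist X i j else 0)
            - (2 * dbarM w X) * (if i < j then w i j else 0) := by
      intro i j
      split
      · ring
      · simp
    calc (∑ i : Fin n, ∑ j : Fin n,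
          if i < j then (2 * w i j * (rowDist X i j - dbarM w X)) else 0)
        = ∑ i : Fin n, ∑ j : Fin n,
            (2 * (if i < j then w i j * rowDist X i j else 0)
              - (2 * dbarM w X) * (if i < j then w i j else 0)) := by
          exact Finset.sum_congr rfl fun i _ => Finset.sum_congr rfl fun j _ => hterm i j
      _ = ∑ i : Fin n, (2 * (∑ j : Fin n, if i < j then w i j * rowDist X i j else 0)
            - (2 * dbarM w X) * (∑ j : Fin n, if i < j then w i j else 0)) := by
          refine Finset.sum_congr rfl fun i _ => ?_
          rw [Finset.sum_sub_distrib, ← Finset.mul_sum, ← Finset.mul_sum]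
      _ = 2 * (∑ i : Fin n, ∑ j : Fin n, if i < j then w i j * rowDist X i j else 0)
            - (2 * dbarM w X) * (∑ i : Fin n, ∑ j : Fin n, if i < j then w i j else 0) := by
          rw [Finset.sum_sub_distrib, ← Finset.mul_sum, ← Finset.mul_sum]
      _ = 0 := by
          rw [hw1, ← dbarM]
          ring
  rw [GEmat]
  rw [Finset.sum_congr rfl fun i _ => Finset.sum_congr rfl fun j _ => hsplit i j]
  rw [← sub_double_sum]
  have : (∑ i : Fin n, ∑ j : Fin n,
      (if i < j then (2 * w i j * (rowDist X i j - dbarM w X)) else 0) • NXmat w X)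
      = (∑ i : Fin n, ∑ j : Fin n,
          if i < j then (2 * w i j * (rowDist X i j - dbarM w X)) else 0) • NXmat w X := by
    rw [Finset.sum_smul]
    refine Finset.sum_congr rfl fun i _ => ?_
    rw [Finset.sum_smul]
  rw [this, hcoef, zero_smul, sub_zero]

lemma Vmat_mul_X :
    Vmat w * X = ∑ i : Fin n, ∑ j : Fin n,
      if i < j then w i j • (Amat i j * X) else 0 := by
  rw [Vmat, Matrix.sum_mul]
  refine Finset.sum_congr rfl fun i _ => ?_
  rw [Matrix.sum_mul]
  refine Finset.sum_congr rfl fun j _ => ?_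
  split
  · rw [Matrix.smul_mul]
  · rw [Matrix.zero_mul]

lemma Bmat_mul_X :
    Bmat w δ X * X = ∑ i : Fin n, ∑ j : Fin n,
      if i < j ∧ 0 < rowDist X i j then
        (w i j * (δ i j / rowDist X i j)) • (Amat i j * X) else 0 := by
  rw [Bmat, Matrix.sum_mul]
  refine Finset.sum_congr rfl fun i _ => ?_
  rw [Matrix.sum_mul]
  refine Finset.sum_congr rfl fun j _ => ?_
  split
  · rw [Matrix.smul_mul]
  · rw [Matrix.zero_mul]

lemma Mmat_mul_X :
    Mmat w X * X = ∑ i : Fin n, ∑ j : Fin n,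
      if i < j ∧ 0 < rowDist X i j then
        (dbarM w X * (w i j / rowDist X i j)) • (Amat i j * X) else 0 := by
  rw [Mmat, Matrix.smul_mul, Matrix.sum_mul, Finset.smul_sum]
  refine Finset.sum_congr rfl fun i _ => ?_
  rw [Matrix.sum_mul, Finset.smul_sum]
  refine Finset.sum_congr rfl fun j _ => ?_
  split
  · rw [Matrix.smul_mul, smul_smul]
  · rw [Matrix.zero_mul, smul_zero]

end Helpers4


end Helpers


/-- Stationary points of `σ₂` are exactly the fixed points of the majorization update:
the Fréchet derivative of `σ₂` at `X` is zero iff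
`((1 − σ₂(X))V + σ₂(X)M(X))X = B(X)X`. -/
theorem stationary_iff_fixed_point
    {n p : ℕ} (hn : 2 ≤ n) (hp : 1 ≤ p)
    (w δ : Fin n → Fin n → ℝ)
    (hw : ∀ i j : Fin n, i < j → 0 ≤ w i j)
    (hw1 : (∑ i : Fin n, ∑ j : Fin n, if i < j then w i j else 0) = 1)
    (hδ : ∀ i j : Fin n, i < j → 0 ≤ δ i j)
    (X : Matrix (Fin n) (Fin p) ℝ)
    (heta : 0 < eta2sqM w X)
    (hd : ∀ i j : Fin n, i < j → 0 < w i j → 0 < rowDist X i j) :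
    HasFDerivAt (sigma2M w δ) (0 : Matrix (Fin n) (Fin p) ℝ →L[ℝ] ℝ) X ↔
      ((1 - sigma2M w δ X) • Vmat w + sigma2M w δ X • Mmat w X) * X = Bmat w δ X * X := by
  classical
  have hηne : eta2sqM w X ≠ 0 := ne_of_gt heta
  have hη := hasFDerivAt_eta2sqM (w := w) (X := X) hw hd
  have hR := hasFDerivAt_sigmaRM (w := w) (δ := δ) (X := X) hw hd
  have hinv : HasFDerivAt (fun Y => (eta2sqM w Y)⁻¹)
      ((-(eta2sqM w X ^ 2)⁻¹) • Fdot (GEmat w X)) X :=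
    (hasDerivAt_inv hηne).comp_hasFDerivAt X hη
  have hprod := hR.mul hinv
  set Gstar : Matrix (Fin n) (Fin p) ℝ :=
    (sigmaRM w δ X * (-(eta2sqM w X ^ 2)⁻¹)) • GEmat w X
      + (eta2sqM w X)⁻¹ • GRmat w δ X with hGstar
  have hS : HasFDerivAt (sigma2M w δ) (Fdot Gstar) X := by
    have hfun : sigma2M w δ
        = fun Y : Matrix (Fin n) (Fin p) ℝ => sigmaRM w δ Y * (eta2sqM w Y)⁻¹ := by
      funext Y; rw [sigma2M, div_eq_mul_inv]
    rw [hfun]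
    have hF : Fdot Gstar
        = sigmaRM w δ X • ((-(eta2sqM w X ^ 2)⁻¹) • Fdot (GEmat w X))
          + (eta2sqM w X)⁻¹ • Fdot (GRmat w δ X) := by
      rw [hGstar, Fdot_add, Fdot_smul, Fdot_smul, smul_smul]
    rw [hF]
    exact hprod
  -- The key matrix identity.
  have hkey : Gstar = (2 / eta2sqM w X) •
      ((((1 - sigma2M w δ X) • Vmat w + sigma2M w δ X • Mmat w X) - Bmat w δ X) * X) := by
    have hs2 : sigma2M w δ X = sigmaRM w δ X / eta2sqM w X := rfl
    rw [hGstar, GEmat_eq hw1, GRmat]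
    rw [Matrix.sub_mul, Matrix.add_mul, Matrix.smul_mul, Matrix.smul_mul,
      Vmat_mul_X, Mmat_mul_X, Bmat_mul_X]
    rw [smul_double_sum, smul_double_sum, smul_double_sum, smul_double_sum,
      add_double_sum, add_double_sum, sub_double_sum]
    rw [smul_double_sum]
    refine Finset.sum_congr rfl fun i _ => Finset.sum_congr rfl fun j _ => ?_
    by_cases hij : i < j
    · by_cases hdd : 0 < rowDist X i j
      · have hdne : rowDist X i j ≠ 0 := ne_of_gt hdd
        rw [if_pos hij, if_pos hij, if_pos hij, if_pos ⟨hij, hdd⟩, if_pos ⟨hij, hdd⟩]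
        match_scalars
        rw [hs2]
        field_simp
        ring
      · have hw0 : w i j = 0 := by
          rcases (hw i j hij).eq_or_lt with h0 | hpos
          · exact h0.symm
          · exact absurd (hd i j hij hpos) hdd
        rw [if_pos hij, if_pos hij, if_pos hij, if_neg (by tauto), if_neg (by tauto)]
        simp [hw0]
    · simp [hij]
  have h2ne : (2 / eta2sqM w X) ≠ 0 := div_ne_zero two_ne_zero hηne
  constructor
  · intro h0
    have huniq : Fdot Gstar = 0 := hS.unique h0
    have hG0 : Gstar = 0 := (Fdot_eq_zero_iff _).1 huniq
    rw [hkey] at hG0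
    have := (smul_eq_zero.mp hG0).resolve_left h2ne
    rw [Matrix.sub_mul, sub_eq_zero] at this
    exact this
  · intro hfix
    have hG0 : Gstar = 0 := by
      rw [hkey, Matrix.sub_mul, hfix, sub_self, smul_zero]
    have hF0 : Fdot Gstar = 0 := by rw [hG0, Fdot_zero]
    rwa [hF0] at hS
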